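/- For every integer k ≥ 2, set K = (k−1)(k−2)/2 and N = (k−1)(k+2)/2. Then there exist an N × (K+N) integer matrix E and an N × 2k integer matrix B such that for all λ, β ∈ ℤ^k with λ₁ ≥ λ₂ ≥ ⋯ ≥ λ_k and λ₁+⋯+λ_k = β₁+⋯+β_k = 0, the set {s ∈ ℕ^{K+N} : E·s = B·(λ₁,…,λ_k,β₁,…,β_k)} is finite and its cardinality equals the weight multiplicity m_λ(β), i.e. the number of Gelfand–Tsetlin patterns with top row λ and weight β. (In other words, the weight multiplicity function of sl_k is a single vector partition function composed with a linear map.) -/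

import Mathlib

/-- A Gelfand–Tsetlin pattern with top row `lam : Fin k → ℤ`, encoded as a function
`x : ℕ → ℕ → ℤ` where row `i` (for `i < k`) has entries `x i 0, …, x i i`
(so row `i` is the row of length `i+1` of the pattern, the top row being row `k-1`),
and all entries outside the triangle are `0`. -/
def IsGTPattern (k : ℕ) (lam : Fin k → ℤ) (x : ℕ → ℕ → ℤ) : Prop :=
  (∀ j : Fin k, x (k - 1) j.1 = lam j) ∧
  (∀ i j : ℕ, i + 1 < k → j ≤ i →
      x i j ≤ x (i + 1) j ∧ x (i + 1) (j + 1) ≤ x i j) ∧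
  (∀ i j : ℕ, k ≤ i ∨ i < j → x i j = 0)

/-- The pattern `x` has weight `beta`: the sum of the row of length `m+1`
equals `beta 0 + ⋯ + beta m`. -/
def GTHasWeight (k : ℕ) (beta : Fin k → ℤ) (x : ℕ → ℕ → ℤ) : Prop :=
  ∀ m : Fin k, (∑ j ∈ Finset.range (m.1 + 1), x m.1 j)
    = ∑ j : Fin k, if j.1 ≤ m.1 then beta j else 0

/-- The weight multiplicity `m_λ(β)`: the number of Gelfand–Tsetlin patterns with
top row `lam` and weight `beta`. -/
noncomputable def gtMult (k : ℕ) (lam beta : Fin k → ℤ) : ℕ :=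
  Set.ncard {x : ℕ → ℕ → ℤ | IsGTPattern k lam x ∧ GTHasWeight k beta x}

namespace GTaux

variable (k : ℕ)

/-- Index type for the unknowns: `(p,q)` with `q ≤ p` encodes `a_{p,q} = x^{(p+1)}_q - x^{(p)}_q`,
and `q > p` encodes `b_{q-1,p} = x^{(q-1)}_p - x^{(q)}_{p+1}`. -/
abbrev U := Fin (k-1) × Fin k

/-- Index type for the equations: `q ≤ p` is the consistency equation `C_{p,q}`,
`q = p+1` is the weight equation `W_p`. -/
abbrev R := {w : Fin (k-1) × Fin k // w.2.1 ≤ w.1.1 + 1}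

/-- value of `s` at slot `(p,q)`, as a total function of naturals. -/
def sval (s : U k → ℤ) (p q : ℕ) : ℤ :=
  if h : p < k-1 ∧ q < k then s (⟨p, h.1⟩, ⟨q, h.2⟩) else 0

/-- extension of `lam` to a total function. -/
def Lf (lam : Fin k → ℤ) (n : ℕ) : ℤ := if h : n < k then lam ⟨n, h⟩ else 0

/-- the concatenated vector `(lam, beta)` as a total function. -/
def Yf (lam beta : Fin k → ℤ) (n : ℕ) : ℤ :=
  if n < k then Lf k lam n else Lf k beta (n - k)

/-- the coefficient matrix of the equations. -/
def M : Matrix (R k) (U k) ℤ := fun r u =>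
  if r.1.2.1 ≤ r.1.1.1 then
    (if r.1.1.1 ≤ u.1.1 ∧ u.2.1 = r.1.2.1 then 1 else 0)
    - (if r.1.1.1 + 1 ≤ u.1.1 ∧ u.2.1 = r.1.2.1 + 1 then 1 else 0)
    + (if u.1.1 = r.1.2.1 ∧ u.2.1 = r.1.1.1 + 1 then 1 else 0)
  else
    (if r.1.1.1 ≤ u.1.1 ∧ u.2.1 ≤ r.1.1.1 then 1 else 0)

/-- the matrix acting on `(lam, beta)`. -/
def Bm : Matrix (R k) (Fin (2*k)) ℤ := fun r c =>
  if r.1.2.1 ≤ r.1.1.1 then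
    (if c.1 = r.1.2.1 then 1 else 0) - (if c.1 = r.1.2.1 + 1 then 1 else 0)
  else
    (if c.1 ≤ r.1.1.1 then 1 else 0) - (if k ≤ c.1 ∧ c.1 - k ≤ r.1.1.1 then 1 else 0)

/-- column sums of `s`. -/
def Fsum (s : U k → ℤ) (i j : ℕ) : ℤ :=
  ∑ u : U k, if i ≤ u.1.1 ∧ u.2.1 = j then s u else 0

theorem Fsum_eq (s : U k → ℤ) (i j : ℕ) :
    Fsum k s i j = ∑ p ∈ Finset.Ico i (k-1), sval k s p j := by
  rw [Fsum, Fintype.sum_prod_type]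
  have h1 : ∀ p : Fin (k-1), (∑ q : Fin k, if i ≤ p.1 ∧ q.1 = j then s (p, q) else 0)
      = if i ≤ p.1 then sval k s p.1 j else 0 := by
    intro p
    by_cases hip : i ≤ p.1
    · simp only [hip, true_and, if_true]
      rcases lt_or_ge j k with hj | hj
      · rw [Finset.sum_eq_single (⟨j, hj⟩ : Fin k)]
        · simp [sval, hj, p.isLt]
        · intro q _ hq
          rw [if_neg]
          intro h; exact hq (Fin.ext h)
        · simp
      · rw [Finset.sum_eq_zero, sval, dif_neg (by omega)]
        intro q _
        rw [if_neg]
        have := q.isLt; omega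
    · simp [hip]
  simp_rw [h1]
  rw [Fin.sum_univ_eq_sum_range (fun p => if i ≤ p then sval k s p j else 0) (k-1),
    ← Finset.sum_filter]
  congr 1
  ext p
  simp only [Finset.mem_filter, Finset.mem_range, Finset.mem_Ico]
  omega

theorem sum_fin_point {N : ℕ} (g : Fin N → ℤ) (n : ℕ) (hn : n < N) :
    (∑ c : Fin N, if c.1 = n then g c else 0) = g ⟨n, hn⟩ := by
  rw [Finset.sum_eq_single (⟨n, hn⟩ : Fin N)]
  · simp
  · intro c _ hc
    rw [if_neg]; intro h; exact hc (Fin.ext h)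
  · simp

theorem sum_point (s : U k → ℤ) (p0 q0 : ℕ) (hp : p0 < k-1) (hq : q0 < k) :
    (∑ u : U k, if u.1.1 = p0 ∧ u.2.1 = q0 then s u else 0) = sval k s p0 q0 := by
  rw [Finset.sum_eq_single ((⟨p0, hp⟩, ⟨q0, hq⟩) : U k)]
  · simp [sval, hp, hq]
  · intro u _ hu
    rw [if_neg]
    rintro ⟨h1, h2⟩
    exact hu (Prod.ext (Fin.ext h1) (Fin.ext h2))
  · simp

theorem mulVec_M_C (s : U k → ℤ) (r : R k) (hc : r.1.2.1 ≤ r.1.1.1) :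
    (M k).mulVec s r
      = Fsum k s r.1.1.1 r.1.2.1 - Fsum k s (r.1.1.1+1) (r.1.2.1+1)
        + sval k s r.1.2.1 (r.1.1.1+1) := by
  have hj : r.1.2.1 < k - 1 := lt_of_le_of_lt hc r.1.1.isLt
  have hi1 : r.1.1.1 + 1 < k := by have := r.1.1.isLt; omega
  rw [Matrix.mulVec, dotProduct, ← sum_point k s r.1.2.1 (r.1.1.1+1) hj hi1, Fsum, Fsum]
  rw [← Finset.sum_sub_distrib, ← Finset.sum_add_distrib]
  apply Finset.sum_congr rfl
  intro u _
  simp only [M]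
  simp only [hc, if_true]
  rw [add_mul, sub_mul]
  simp only [ite_mul, one_mul, zero_mul]

theorem mulVec_M_W (s : U k → ℤ) (r : R k) (hc : ¬ r.1.2.1 ≤ r.1.1.1) :
    (M k).mulVec s r = ∑ j ∈ Finset.range (r.1.1.1+1), Fsum k s r.1.1.1 j := by
  rw [Matrix.mulVec, dotProduct]
  simp only [Fsum]
  rw [Finset.sum_comm]
  apply Finset.sum_congr rfl
  intro u _
  simp only [M]
  simp only [hc, if_false, ite_mul, one_mul, zero_mul]
  by_cases h1 : r.1.1.1 ≤ u.1.1
  · simp only [h1, true_and]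
    rw [Finset.sum_ite_eq (Finset.range (r.1.1.1+1)) u.2.1 (fun _ => s u)]
    simp [Nat.lt_succ_iff]
  · simp [h1]


theorem sum_range_Lf (lam : Fin k → ℤ) (m : ℕ) (hm : m < k) :
    (∑ j ∈ Finset.range (m+1), Lf k lam j)
      = ∑ j : Fin k, if j.1 ≤ m then lam j else 0 := by
  have h2 : (∑ j : Fin k, if j.1 ≤ m then lam j else 0)
      = ∑ j ∈ Finset.range k, (if j ≤ m then Lf k lam j else 0) := by
    rw [← Fin.sum_univ_eq_sum_range (fun j => if j ≤ m then Lf k lam j else 0) k]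
    apply Finset.sum_congr rfl
    intro j _
    by_cases h : j.1 ≤ m
    · simp [h, Lf, j.isLt]
    · simp [h]
  rw [h2, ← Finset.sum_filter]
  congr 1
  ext a
  simp only [Finset.mem_filter, Finset.mem_range]
  omega

theorem mulVec_Bm_C (lam beta : Fin k → ℤ) (y : Fin (2*k) → ℤ)
    (hy : ∀ c : Fin (2*k), y c = Yf k lam beta c.1) (r : R k) (hc : r.1.2.1 ≤ r.1.1.1) :
    (Bm k).mulVec y r = Lf k lam r.1.2.1 - Lf k lam (r.1.2.1 + 1) := by
  have hk1 : r.1.1.1 < k - 1 := r.1.1.isLt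
  have hj : r.1.2.1 + 1 < k := by omega
  have h2k : r.1.2.1 < 2*k := by omega
  have h2k' : r.1.2.1 + 1 < 2*k := by omega
  rw [Matrix.mulVec, dotProduct]
  simp only [Bm, hc, if_true, sub_mul, ite_mul, one_mul, zero_mul]
  rw [Finset.sum_sub_distrib, sum_fin_point y r.1.2.1 h2k, sum_fin_point y (r.1.2.1+1) h2k',
    hy, hy]
  simp only [Yf, if_pos (show r.1.2.1 < k by omega), if_pos hj]

theorem mulVec_Bm_W (lam beta : Fin k → ℤ) (y : Fin (2*k) → ℤ)
    (hy : ∀ c : Fin (2*k), y c = Yf k lam beta c.1) (r : R k) (hc : ¬ r.1.2.1 ≤ r.1.1.1) :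
    (Bm k).mulVec y r
      = (∑ j : Fin k, if j.1 ≤ r.1.1.1 then lam j else 0)
        - (∑ j : Fin k, if j.1 ≤ r.1.1.1 then beta j else 0) := by
  set m := r.1.1.1 with hm
  have hmk : m < k - 1 := r.1.1.isLt
  have hkk : 2 ≤ k := by omega
  rw [Matrix.mulVec, dotProduct]
  simp only [Bm, ← hm, hc, if_false, sub_mul, ite_mul, one_mul, zero_mul]
  rw [Finset.sum_sub_distrib]
  congr 1
  · -- lambda part
    simp only [hy]
    rw [Fin.sum_univ_eq_sum_range (fun n => if n ≤ m then Yf k lam beta n else 0) (2*k),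
      ← sum_range_Lf k lam m (by omega)]
    rw [show (∑ j ∈ Finset.range (m+1), Lf k lam j)
        = ∑ n ∈ Finset.range (m+1), (if n ≤ m then Yf k lam beta n else 0) from ?_]
    · apply (Finset.sum_subset ?_ ?_).symm
      · intro a ha; simp only [Finset.mem_range] at *; omega
      · intro a ha hna
        simp only [Finset.mem_range] at ha hna
        rw [if_neg (by omega)]
    · apply Finset.sum_congr rfl
      intro n hn
      simp only [Finset.mem_range] at hn
      rw [if_pos (by omega), Yf, if_pos (by omega)]
  · -- beta part
    simp only [hy]
    rw [Fin.sum_univ_eq_sum_range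
      (fun n => if k ≤ n ∧ n - k ≤ m then Yf k lam beta n else 0) (2*k),
      ← Finset.sum_filter]
    rw [show (Finset.range (2*k)).filter (fun n => k ≤ n ∧ n - k ≤ m)
        = Finset.Ico k (k+m+1) from ?_]
    · rw [Finset.sum_Ico_eq_sum_range (fun n => Yf k lam beta n) k (k+m+1)]
      rw [show k + m + 1 - k = m + 1 by omega]
      rw [← sum_range_Lf k beta m (by omega)]
      apply Finset.sum_congr rfl
      intro n hn
      simp only [Finset.mem_range] at hn
      rw [Yf, if_neg (by omega)]
      rw [show k + n - k = n by omega]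
    · ext n
      simp only [Finset.mem_filter, Finset.mem_range, Finset.mem_Ico]
      omega


def CondC (s : U k → ℤ) (lam : Fin k → ℤ) : Prop :=
  ∀ i j : ℕ, j ≤ i → i < k - 1 →
    Fsum k s i j - Fsum k s (i+1) (j+1) + sval k s j (i+1)
      = Lf k lam j - Lf k lam (j+1)

def CondW (s : U k → ℤ) (lam beta : Fin k → ℤ) : Prop :=
  ∀ m : ℕ, m < k - 1 →
    (∑ j ∈ Finset.range (m+1), Fsum k s m j)
      = (∑ j : Fin k, if j.1 ≤ m then lam j else 0)
        - (∑ j : Fin k, if j.1 ≤ m then beta j else 0)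

theorem cond_iff (lam beta : Fin k → ℤ) (s : U k → ℤ) (y : Fin (2*k) → ℤ)
    (hy : ∀ c : Fin (2*k), y c = Yf k lam beta c.1) :
    (M k).mulVec s = (Bm k).mulVec y ↔ CondC k s lam ∧ CondW k s lam beta := by
  constructor
  · intro h
    constructor
    · intro i j hji hi
      have hj : j < k := by omega
      have hmem : ((⟨i, hi⟩, ⟨j, hj⟩) : Fin (k-1) × Fin k).2.1
          ≤ ((⟨i, hi⟩, ⟨j, hj⟩) : Fin (k-1) × Fin k).1.1 + 1 := by
        simpa using Nat.le_succ_of_le hji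
      have := congrFun h (⟨(⟨i, hi⟩, ⟨j, hj⟩), hmem⟩ : R k)
      rwa [mulVec_M_C k s _ (by simpa using hji),
        mulVec_Bm_C k lam beta y hy _ (by simpa using hji)] at this
    · intro m hm
      have hq : m + 1 < k := by omega
      have hmem : ((⟨m, hm⟩, ⟨m+1, hq⟩) : Fin (k-1) × Fin k).2.1
          ≤ ((⟨m, hm⟩, ⟨m+1, hq⟩) : Fin (k-1) × Fin k).1.1 + 1 := le_refl _
      have := congrFun h (⟨(⟨m, hm⟩, ⟨m+1, hq⟩), hmem⟩ : R k)
      rwa [mulVec_M_W k s _ (by simp),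
        mulVec_Bm_W k lam beta y hy _ (by simp)] at this
  · rintro ⟨h1, h2⟩
    funext r
    by_cases hc : r.1.2.1 ≤ r.1.1.1
    · rw [mulVec_M_C k s r hc, mulVec_Bm_C k lam beta y hy r hc]
      exact h1 r.1.1.1 r.1.2.1 hc r.1.1.isLt
    · rw [mulVec_M_W k s r hc, mulVec_Bm_W k lam beta y hy r hc]
      exact h2 r.1.1.1 r.1.1.isLt

/-- extraction of the slack variables from a pattern. -/
def extr (x : ℕ → ℕ → ℤ) : U k → ℤ := fun u =>
  if u.2.1 ≤ u.1.1 then x (u.1.1+1) u.2.1 - x u.1.1 u.2.1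
  else x (u.2.1 - 1) u.1.1 - x u.2.1 (u.1.1+1)

/-- reconstruction of the pattern from the slack variables. -/
def recon (lam : Fin k → ℤ) (s : U k → ℤ) : ℕ → ℕ → ℤ := fun i j =>
  if i < k ∧ j ≤ i then Lf k lam j - Fsum k s i j else 0

theorem Fsum_extr (x : ℕ → ℕ → ℤ) (i j : ℕ) (hji : j ≤ i) (hik : i ≤ k-1) :
    Fsum k (extr k x) i j = x (k-1) j - x i j := by
  rw [Fsum_eq]
  rw [Finset.sum_congr rfl (fun p hp => ?_)]
  · rw [Finset.sum_Ico_eq_sub (fun p => x (p+1) j - x p j) hik,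
      Finset.sum_range_sub (fun p => x p j), Finset.sum_range_sub (fun p => x p j)]
    ring
  · simp only [Finset.mem_Ico] at hp
    rw [sval, dif_pos ⟨hp.2, by omega⟩, extr, if_pos (show j ≤ p by omega)]

theorem Fsum_succ (s : U k → ℤ) (i j : ℕ) (hi : i < k-1) :
    Fsum k s i j - Fsum k s (i+1) j = sval k s i j := by
  rw [Fsum_eq, Fsum_eq, Finset.sum_eq_sum_Ico_succ_bot hi (fun p => sval k s p j)]
  ring

theorem Fsum_top (s : U k → ℤ) (i j : ℕ) (hik : k - 1 ≤ i) : Fsum k s i j = 0 := by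
  rw [Fsum_eq, Finset.Ico_eq_empty (by omega), Finset.sum_empty]


section corr
variable {k : ℕ} (hk : 2 ≤ k) {lam beta : Fin k → ℤ}

theorem top_row {x : ℕ → ℕ → ℤ} (hx : IsGTPattern k lam x) (j : ℕ) (hj : j < k) :
    x (k-1) j = Lf k lam j := by
  rw [Lf, dif_pos hj]
  exact hx.1 ⟨j, hj⟩

theorem extr_condC {x : ℕ → ℕ → ℤ} (hx : IsGTPattern k lam x) :
    CondC k (extr k x) lam := by
  intro i j hji hi
  rw [Fsum_extr k x i j hji (by omega), Fsum_extr k x (i+1) (j+1) (by omega) (by omega),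
    top_row hx j (by omega), top_row hx (j+1) (by omega)]
  have hs : sval k (extr k x) j (i+1) = x i j - x (i+1) (j+1) := by
    rw [sval, dif_pos ⟨by omega, by omega⟩, extr, if_neg (by simp; omega)]
    simp
  rw [hs]; ring

theorem extr_condW {x : ℕ → ℕ → ℤ} (hx : IsGTPattern k lam x)
    (hw : GTHasWeight k beta x) : CondW k (extr k x) lam beta := by
  intro m hm
  have h1 : ∀ j ∈ Finset.range (m+1), Fsum k (extr k x) m j = x (k-1) j - x m j := by
    intro j hj
    simp only [Finset.mem_range] at hj
    exact Fsum_extr k x m j (by omega) (by omega)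
  rw [Finset.sum_congr rfl h1, Finset.sum_sub_distrib]
  have h2 : ∀ j ∈ Finset.range (m+1), x (k-1) j = Lf k lam j := by
    intro j hj
    simp only [Finset.mem_range] at hj
    exact top_row hx j (by omega)
  rw [Finset.sum_congr rfl h2, sum_range_Lf k lam m (by omega)]
  have h3 := hw ⟨m, by omega⟩
  simp only at h3
  rw [h3]

theorem extr_nonneg {x : ℕ → ℕ → ℤ} (hx : IsGTPattern k lam x) (u : U k) :
    0 ≤ extr k x u := by
  obtain ⟨p, q⟩ := u
  simp only [extr]
  by_cases hc : q.1 ≤ p.1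
  · rw [if_pos hc]
    have := (hx.2.1 p.1 q.1 (by have := p.isLt; omega) hc).1
    omega
  · rw [if_neg hc]
    have hq1 : 1 ≤ q.1 := by omega
    have := (hx.2.1 (q.1-1) p.1 (by have := q.isLt; omega) (by omega)).2
    rw [show q.1 - 1 + 1 = q.1 by omega] at this
    omega

variable {s : U k → ℤ}

theorem recon_pattern (hC : CondC k s lam) (hnn : ∀ u, 0 ≤ s u) :
    IsGTPattern k lam (recon k lam s) := by
  refine ⟨?_, ?_, ?_⟩
  · intro j
    rw [recon]
    rw [if_pos ⟨by have := j.isLt; omega, by have := j.isLt; omega⟩, Fsum_top k s _ _ le_rfl, Lf,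
      dif_pos j.isLt]
    simp
  · intro i j hik hji
    have h1 : recon k lam s i j = Lf k lam j - Fsum k s i j := by
      rw [recon, if_pos ⟨by omega, hji⟩]
    have h2 : recon k lam s (i+1) j = Lf k lam j - Fsum k s (i+1) j := by
      rw [recon, if_pos ⟨by omega, by omega⟩]
    have h3 : recon k lam s (i+1) (j+1) = Lf k lam (j+1) - Fsum k s (i+1) (j+1) := by
      rw [recon, if_pos ⟨by omega, by omega⟩]
    constructor
    · rw [h1, h2]
      have h4 := Fsum_succ k s i j (by omega)
      have h5 : 0 ≤ sval k s i j := by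
        rw [sval]; split
        · exact hnn _
        · exact le_rfl
      omega
    · rw [h1, h3]
      have h4 := hC i j hji (by omega)
      have h5 : 0 ≤ sval k s j (i+1) := by
        rw [sval]; split
        · exact hnn _
        · exact le_rfl
      omega
  · intro i j hij
    rw [recon, if_neg (by omega)]

theorem recon_weight (hlam : (∑ i, lam i) = 0) (hbeta : (∑ i, beta i) = 0)
    (hW : CondW k s lam beta) : GTHasWeight k beta (recon k lam s) := by
  intro m
  have hcong : ∀ j ∈ Finset.range (m.1+1), recon k lam s m.1 j
      = Lf k lam j - Fsum k s m.1 j := by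
    intro j hj
    simp only [Finset.mem_range] at hj
    rw [recon, if_pos ⟨m.isLt, by omega⟩]
  rw [Finset.sum_congr rfl hcong, Finset.sum_sub_distrib,
    sum_range_Lf k lam m.1 m.isLt]
  by_cases hm : m.1 < k - 1
  · rw [hW m.1 hm]; ring
  · -- top row: m.1 = k - 1
    have hm1 : m.1 = k - 1 := by have := m.isLt; omega
    have hz : ∀ j ∈ Finset.range (m.1+1), Fsum k s m.1 j = 0 := by
      intro j _; exact Fsum_top k s _ _ (by omega)
    rw [Finset.sum_congr rfl hz]
    have hall : ∀ f : Fin k → ℤ, (∑ j : Fin k, if j.1 ≤ m.1 then f j else 0) = ∑ j, f j := by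
      intro f
      apply Finset.sum_congr rfl
      intro j _
      rw [if_pos (by have := j.isLt; omega)]
    rw [hall lam, hall beta, hlam, hbeta]
    simp

theorem extr_recon (hC : CondC k s lam) : extr k (recon k lam s) = s := by
  funext u
  obtain ⟨p, q⟩ := u
  rw [extr]
  by_cases hc : q.1 ≤ p.1
  · rw [if_pos hc]
    have h1 : recon k lam s p.1 q.1 = Lf k lam q.1 - Fsum k s p.1 q.1 := by
      rw [recon, if_pos ⟨by have := p.isLt; omega, hc⟩]
    have h2 : recon k lam s (p.1+1) q.1 = Lf k lam q.1 - Fsum k s (p.1+1) q.1 := by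
      rw [recon, if_pos ⟨by have := p.isLt; omega, by omega⟩]
    have h4 := Fsum_succ k s p.1 q.1 p.isLt
    have h5 : sval k s p.1 q.1 = s (p, q) := by
      rw [sval, dif_pos ⟨p.isLt, q.isLt⟩]
    simp only
    omega
  · rw [if_neg hc]
    have hq1 : 1 ≤ q.1 := by omega
    have hqk : q.1 < k := q.isLt
    have hpk : p.1 ≤ q.1 - 1 := by omega
    have h1 : recon k lam s (q.1-1) p.1 = Lf k lam p.1 - Fsum k s (q.1-1) p.1 := by
      rw [recon, if_pos ⟨by omega, hpk⟩]
    have h2 : recon k lam s q.1 (p.1+1)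
        = Lf k lam (p.1+1) - Fsum k s q.1 (p.1+1) := by
      rw [recon, if_pos ⟨by omega, by omega⟩]
    have h4 := hC (q.1-1) p.1 hpk (by omega)
    rw [show q.1 - 1 + 1 = q.1 by omega] at h4
    have h5 : sval k s p.1 q.1 = s (p, q) := by
      rw [sval, dif_pos ⟨by omega, q.isLt⟩]
    simp only
    omega

theorem recon_extr {x : ℕ → ℕ → ℤ} (hx : IsGTPattern k lam x) :
    recon k lam (extr k x) = x := by
  funext i j
  rw [recon]
  by_cases h : i < k ∧ j ≤ i
  · rw [if_pos h, Fsum_extr k x i j h.2 (by omega), top_row hx j (by omega)]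
    ring
  · rw [if_neg h, (hx.2.2 i j (by omega)).symm]

end corr


theorem pattern_bound {k : ℕ} {lam : Fin k → ℤ} (hk : 2 ≤ k) (hanti : Antitone lam)
    {x : ℕ → ℕ → ℤ} (hx : IsGTPattern k lam x) :
    ∀ i j : ℕ, j ≤ i → i < k →
      lam ⟨k-1, by omega⟩ ≤ x i j ∧ x i j ≤ lam ⟨0, by omega⟩ := by
  have key : ∀ d : ℕ, ∀ j : ℕ, j ≤ k-1-d →
      lam ⟨k-1, by omega⟩ ≤ x (k-1-d) j ∧ x (k-1-d) j ≤ lam ⟨0, by omega⟩ := by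
    intro d
    induction d with
    | zero =>
      intro j hj
      simp only [Nat.sub_zero]
      rw [hx.1 ⟨j, by omega⟩]
      constructor
      · exact hanti (show (⟨j, by omega⟩ : Fin k) ≤ ⟨k-1, by omega⟩ by
          rw [Fin.mk_le_mk]; omega)
      · exact hanti (show (⟨0, by omega⟩ : Fin k) ≤ ⟨j, by omega⟩ by
          rw [Fin.mk_le_mk]; omega)
    | succ d ih =>
      intro j hj
      by_cases hd : k - 1 ≤ d
      · rw [show k-1-(d+1) = k-1-d by omega]
        exact ih j (by omega)
      · have hstep := hx.2.1 (k-1-(d+1)) j (by omega) hj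
        have hE : k-1-(d+1)+1 = k-1-d := by omega
        rw [hE] at hstep
        have u1 := ih j (by omega)
        have u2 := ih (j+1) (by omega)
        exact ⟨le_trans u2.1 hstep.2, le_trans hstep.1 u1.2⟩
  intro i j hji hik
  have h := key (k-1-i) j (by omega)
  rw [show k-1-(k-1-i) = i by omega] at h
  exact h

def Phi {k : ℕ} {lam : Fin k → ℤ} (hk : 2 ≤ k) (hanti : Antitone lam)
    (xp : {x : ℕ → ℕ → ℤ | IsGTPattern k lam x}) (p : Fin k × Fin k) :
    Set.Icc (lam ⟨k-1, by omega⟩) (lam ⟨0, by omega⟩) :=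
  if h : p.2.1 ≤ p.1.1 then
    ⟨xp.1 p.1.1 p.2.1, Set.mem_Icc.2
      (pattern_bound hk hanti xp.2 p.1.1 p.2.1 h p.1.isLt)⟩
  else ⟨lam ⟨k-1, by omega⟩, Set.mem_Icc.2 ⟨le_rfl,
    hanti (show (⟨0, by omega⟩ : Fin k) ≤ ⟨k-1, by omega⟩ by rw [Fin.mk_le_mk]; omega)⟩⟩

theorem pattern_finite {k : ℕ} {lam beta : Fin k → ℤ} (hk : 2 ≤ k) (hanti : Antitone lam) :
    {x : ℕ → ℕ → ℤ | IsGTPattern k lam x ∧ GTHasWeight k beta x}.Finite := by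
  apply Set.Finite.subset (s := {x : ℕ → ℕ → ℤ | IsGTPattern k lam x})
    ?_ (fun x hx => hx.1)
  haveI := (Set.finite_Icc (lam ⟨k-1, by omega⟩) (lam ⟨0, by omega⟩)).to_subtype
  have hinj : Function.Injective (Phi hk hanti) := by
    intro x1 x2 h
    apply Subtype.ext
    funext i j
    by_cases hij : j ≤ i ∧ i < k
    · have h2 := congrFun h ((⟨i, hij.2⟩, ⟨j, by omega⟩) : Fin k × Fin k)
      have hj : j ≤ i := hij.1
      simp only [Phi, hj, dif_pos] at h2
      exact Subtype.ext_iff.1 h2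
    · rw [x1.2.2.2 i j (by omega), x2.2.2.2 i j (by omega)]
  haveI : Finite {x : ℕ → ℕ → ℤ | IsGTPattern k lam x} := Finite.of_injective _ hinj
  exact Set.toFinite _

def Requiv : R k ≃ Σ p : Fin (k-1), Fin (p.1+2) where
  toFun r := ⟨r.1.1, ⟨r.1.2.1, by have := r.2; omega⟩⟩
  invFun t := ⟨(t.1, ⟨t.2.1, by have h1 := t.1.isLt; have h2 := t.2.isLt; omega⟩),
    by have := t.2.isLt; simpa using (by omega : t.2.1 ≤ t.1.1 + 1)⟩
  left_inv r := rfl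
  right_inv t := rfl

theorem card_R (hk : 2 ≤ k) :
    Fintype.card (R k) = (k-1)*(k-2)/2 + 2*(k-1) := by
  rw [Fintype.card_congr (Requiv k), Fintype.card_sigma]
  simp only [Fintype.card_fin]
  rw [Fin.sum_univ_eq_sum_range (fun n => n+2) (k-1), Finset.sum_add_distrib,
    Finset.sum_range_id, Finset.sum_const, Finset.card_range]
  have : k - 1 - 1 = k - 2 := by omega
  rw [this]
  ring

theorem card_U : Fintype.card (U k) = (k-1) * k := by
  simp [Fintype.card_prod]

end GTaux

/-- The weight multiplicity function of `sl_k` is a single vector partition function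
composed with a linear map: there are integer matrices `E` (of size `N × (K+N)`) and
`B` (of size `N × 2k`), with `K = (k-1)(k-2)/2` and `N = (k-1)(k+2)/2`, such that for
all dominant `λ` and all `β` (integral, sum zero), the set
`{s ∈ ℕ^(K+N) : E s = B (λ,β)}` is finite with cardinality `m_λ(β)`. -/
theorem multiplicity_is_single_partition_function (k : ℕ) (hk : 2 ≤ k) :
    ∃ (E : Matrix (Fin ((k - 1) * (k + 2) / 2))
          (Fin ((k - 1) * (k - 2) / 2 + (k - 1) * (k + 2) / 2)) ℤ)
      (B : Matrix (Fin ((k - 1) * (k + 2) / 2)) (Fin (2 * k)) ℤ),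
      ∀ lam beta : Fin k → ℤ, Antitone lam →
        (∑ i, lam i) = 0 → (∑ i, beta i) = 0 →
        {s : Fin ((k - 1) * (k - 2) / 2 + (k - 1) * (k + 2) / 2) → ℕ |
            E.mulVec (fun j => (s j : ℤ))
              = B.mulVec (fun i : Fin (2 * k) =>
                  if h : i.1 < k then lam ⟨i.1, h⟩
                  else beta ⟨i.1 - k, by have := i.isLt; omega⟩)}.Finite ∧
        Set.ncard {s : Fin ((k - 1) * (k - 2) / 2 + (k - 1) * (k + 2) / 2) → ℕ |
            E.mulVec (fun j => (s j : ℤ))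
              = B.mulVec (fun i : Fin (2 * k) =>
                  if h : i.1 < k then lam ⟨i.1, h⟩
                  else beta ⟨i.1 - k, by have := i.isLt; omega⟩)}
          = gtMult k lam beta := by
  obtain ⟨m, rfl⟩ : ∃ m, k = m + 2 := ⟨k - 2, by omega⟩
  clear hk
  obtain ⟨a, ha⟩ : ∃ a, (m+1)*m = 2*a := by
    rcases Nat.even_or_odd m with ⟨t, ht⟩ | ⟨t, ht⟩
    · exact ⟨(m+1)*t, by rw [ht]; ring⟩
    · exact ⟨(t+1)*m, by rw [ht]; ring⟩
  have hs1 : m + 2 - 1 = m + 1 := by omega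
  have eK : (m+2-1)*(m+2-2)/2 = a := by
    rw [hs1, show m+2-2 = m by omega, ha]
    exact Nat.mul_div_cancel_left a (by norm_num)
  have eN : (m+2-1)*(m+2+2)/2 = a + 2*(m+1) := by
    rw [hs1, show (m+1)*(m+2+2) = 2*(a+2*(m+1)) from by
      rw [show (m+1)*(m+2+2) = (m+1)*m + 4*(m+1) from by ring, ha]; ring]
    exact Nat.mul_div_cancel_left _ (by norm_num)
  have cardR : Fintype.card (GTaux.R (m+2)) = (m+2-1)*(m+2+2)/2 := by
    rw [GTaux.card_R _ (by omega), eK, eN]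
    omega
  have cardU : Fintype.card (GTaux.U (m+2))
      = (m+2-1)*(m+2-2)/2 + (m+2-1)*(m+2+2)/2 := by
    rw [GTaux.card_U, eK, eN, hs1]
    have h2 : (m+1)*(m+2) = (m+1)*m + 2*(m+1) := by ring
    omega
  let eR : Fin ((m+2-1)*(m+2+2)/2) ≃ GTaux.R (m+2) :=
    Fintype.equivOfCardEq (by rw [Fintype.card_fin, cardR])
  let eU : Fin ((m+2-1)*(m+2-2)/2 + (m+2-1)*(m+2+2)/2) ≃ GTaux.U (m+2) :=
    Fintype.equivOfCardEq (by rw [Fintype.card_fin, cardU])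
  refine ⟨(GTaux.M (m+2)).submatrix eR eU,
    (GTaux.Bm (m+2)).submatrix eR (Equiv.refl _), ?_⟩
  intro lam beta hanti hlam hbeta
  set yv : Fin (2 * (m+2)) → ℤ := fun i : Fin (2 * (m + 2)) =>
      if h : i.1 < m + 2 then lam ⟨i.1, h⟩
      else beta ⟨i.1 - (m + 2), by have := i.isLt; omega⟩ with hyv
  have hy : ∀ c : Fin (2*(m+2)), yv c = GTaux.Yf (m+2) lam beta c.1 := by
    intro c
    rw [hyv]
    simp only []
    by_cases hc : c.1 < m+2
    · rw [dif_pos hc, GTaux.Yf, if_pos hc, GTaux.Lf, dif_pos hc]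
    · rw [dif_neg hc, GTaux.Yf, if_neg hc, GTaux.Lf,
        dif_pos (show c.1 - (m+2) < m+2 by have := c.isLt; omega)]
  have hmem : ∀ s : Fin ((m+2-1)*(m+2-2)/2 + (m+2-1)*(m+2+2)/2) → ℕ,
      (((GTaux.M (m+2)).submatrix eR eU).mulVec (fun j => (s j : ℤ))
        = ((GTaux.Bm (m+2)).submatrix eR (Equiv.refl _)).mulVec yv)
      ↔ ((GTaux.M (m+2)).mulVec (fun u => (s (eU.symm u) : ℤ))
          = (GTaux.Bm (m+2)).mulVec yv) := by
    intro s
    rw [Matrix.submatrix_mulVec_equiv, Matrix.submatrix_mulVec_equiv]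
    constructor
    · intro h
      funext r
      have h2 := congrFun h (eR.symm r)
      simpa [Function.comp_def] using h2
    · intro h
      funext i
      simp only [Function.comp_apply]
      have h2 := congrFun h (eR i)
      simpa [Function.comp_def] using h2
  let P := {x : ℕ → ℕ → ℤ | IsGTPattern (m+2) lam x ∧ GTHasWeight (m+2) beta x}
  let S0 := {t : GTaux.U (m+2) → ℕ |
      (GTaux.M (m+2)).mulVec (fun u => (t u : ℤ)) = (GTaux.Bm (m+2)).mulVec yv}
  let E1 : ↥({s : Fin ((m+2-1)*(m+2-2)/2 + (m+2-1)*(m+2+2)/2) → ℕ |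
      ((GTaux.M (m+2)).submatrix eR eU).mulVec (fun j => (s j : ℤ))
        = ((GTaux.Bm (m+2)).submatrix eR (Equiv.refl _)).mulVec yv}) ≃ ↥S0 :=
  { toFun := fun sp => ⟨fun u => sp.1 (eU.symm u), (hmem sp.1).1 sp.2⟩
    invFun := fun tp => ⟨fun j => tp.1 (eU j), by
      apply (hmem _).2
      have h3 : (fun u => ((tp.1 (eU (eU.symm u)) : ℤ))) = fun u => (tp.1 u : ℤ) := by
        funext u; rw [Equiv.apply_symm_apply]
      show (GTaux.M (m+2)).mulVec (fun u => ((tp.1 (eU (eU.symm u)) : ℤ)))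
        = (GTaux.Bm (m+2)).mulVec yv
      rw [h3]; exact tp.2⟩
    left_inv := fun sp => by
      apply Subtype.ext; funext j; simp
    right_inv := fun tp => by
      apply Subtype.ext; funext u; simp }
  let E2 : ↥S0 ≃ ↥P :=
  { toFun := fun tp => ⟨GTaux.recon (m+2) lam (fun u => (tp.1 u : ℤ)), by
      have hc := (GTaux.cond_iff (m+2) lam beta (fun u => (tp.1 u : ℤ)) yv hy).1 tp.2
      exact ⟨GTaux.recon_pattern hc.1 (fun u => Int.natCast_nonneg _),
        GTaux.recon_weight hlam hbeta hc.2⟩⟩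
    invFun := fun xp => ⟨fun u => (GTaux.extr (m+2) xp.1 u).toNat, by
      have hcast : (fun u => ((GTaux.extr (m+2) xp.1 u).toNat : ℤ))
          = GTaux.extr (m+2) xp.1 :=
        funext fun u => Int.toNat_of_nonneg (GTaux.extr_nonneg xp.2.1 u)
      show (GTaux.M (m+2)).mulVec (fun u => ((GTaux.extr (m+2) xp.1 u).toNat : ℤ))
        = (GTaux.Bm (m+2)).mulVec yv
      rw [hcast]
      exact (GTaux.cond_iff (m+2) lam beta _ yv hy).2
        ⟨GTaux.extr_condC xp.2.1, GTaux.extr_condW xp.2.1 xp.2.2⟩⟩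
    left_inv := fun tp => by
      apply Subtype.ext
      funext u
      have hc := (GTaux.cond_iff (m+2) lam beta (fun u => (tp.1 u : ℤ)) yv hy).1 tp.2
      have h4 := GTaux.extr_recon (s := fun u => (tp.1 u : ℤ)) hc.1
      show (GTaux.extr (m+2) (GTaux.recon (m+2) lam fun u => (tp.1 u : ℤ)) u).toNat
        = tp.1 u
      rw [congrFun h4 u]
      simp
    right_inv := fun xp => by
      apply Subtype.ext
      have hcast : (fun u => ((GTaux.extr (m+2) xp.1 u).toNat : ℤ))
          = GTaux.extr (m+2) xp.1 :=
        funext fun u => Int.toNat_of_nonneg (GTaux.extr_nonneg xp.2.1 u)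
      show GTaux.recon (m+2) lam (fun u => ((GTaux.extr (m+2) xp.1 u).toNat : ℤ)) = xp.1
      rw [hcast]
      exact GTaux.recon_extr xp.2.1 }
  have hPfin : P.Finite := GTaux.pattern_finite (by omega) hanti
  haveI : Finite ↥P := hPfin.to_subtype
  constructor
  · exact Set.finite_coe_iff.mp (Finite.of_equiv _ (E1.trans E2).symm)
  · rw [gtMult, ← Nat.card_coe_set_eq, ← Nat.card_coe_set_eq]
    exact Nat.card_congr (E1.trans E2)
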